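/- arXiv:2309.02412 — 6 statements merged into one kernel-verified Lean document; each statement's English description precedes it below -/
import Mathlib

section
/- Let x ∈ Q, z ∈ ℝⁿ, σ > 0, θ ≥ 0, and let x⁺ ∈ Q satisfy ‖∇M_{x,σ}(x⁺) + ψ'(x⁺)‖ ≤ θ‖x⁺ − x‖² for some subgradient ψ'(x⁺) ∈ ∂ψ(x⁺). Suppose the approximations satisfy ‖g − ∇f(x)‖ ≤ δ_g and ‖B − ∇²f(z)‖ ≤ δ_B for some δ_g, δ_B ≥ 0. Then, with r := ‖x⁺ − x‖, one has ‖∇f(x⁺) + ψ'(x⁺)‖ ≤ (θ + (σ + L)/2)·r² + (δ_B + L‖x − z‖)·r + δ_g. -/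
open RealInnerProductSpace

private lemma norm_five {E : Type*} [SeminormedAddCommGroup E] (a b c e s : E) :
    ‖a + b + c + e - s‖ ≤ ‖a‖ + ‖b‖ + ‖c‖ + ‖e‖ + ‖s‖ := by
  calc ‖a + b + c + e - s‖ ≤ ‖a + b + c + e‖ + ‖s‖ := norm_sub_le _ _
    _ ≤ (‖a + b + c‖ + ‖e‖) + ‖s‖ := by gcongr; exact norm_add_le _ _
    _ ≤ ((‖a + b‖ + ‖c‖) + ‖e‖) + ‖s‖ := by gcongr; exact norm_add_le _ _
    _ ≤ (((‖a‖ + ‖b‖) + ‖c‖) + ‖e‖) + ‖s‖ := by gcongr; exact norm_add_le _ _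
    _ = ‖a‖ + ‖b‖ + ‖c‖ + ‖e‖ + ‖s‖ := by ring

/-- Lemma 1 of the paper: bound on the new (sub)gradient norm after one
inexact cubic-regularized Newton step with approximate gradient `g` and lazy Hessian
approximation `B`. -/
theorem stmt_0 {n : ℕ} (hn : 1 ≤ n)
    (f ψ : EuclideanSpace ℝ (Fin n) → ℝ) (Q : Set (EuclideanSpace ℝ (Fin n)))
    (L : ℝ) (hL : 0 ≤ L)
    (hf : ContDiff ℝ 2 f)
    (hLip : ∀ u v : EuclideanSpace ℝ (Fin n),
      ‖fderiv ℝ (gradient f) v - fderiv ℝ (gradient f) u‖ ≤ L * ‖v - u‖)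
    (hQconv : Convex ℝ Q) (hψ : ConvexOn ℝ Q ψ)
    (x : EuclideanSpace ℝ (Fin n)) (hx : x ∈ Q) (z : EuclideanSpace ℝ (Fin n))
    (σ θ δg δB : ℝ) (hσ : 0 < σ) (hθ : 0 ≤ θ) (hδg : 0 ≤ δg) (hδB : 0 ≤ δB)
    (g : EuclideanSpace ℝ (Fin n))
    (B : EuclideanSpace ℝ (Fin n) →L[ℝ] EuclideanSpace ℝ (Fin n))
    (hBsym : ∀ u v : EuclideanSpace ℝ (Fin n), ⟪B u, v⟫ = ⟪u, B v⟫)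
    (xp : EuclideanSpace ℝ (Fin n)) (hxp : xp ∈ Q)
    (ψp : EuclideanSpace ℝ (Fin n))
    (hψp : ∀ y : EuclideanSpace ℝ (Fin n), ψ xp + ⟪ψp, y - xp⟫ ≤ ψ y)
    (hmodel : ‖g + B (xp - x) + (σ / 2 * ‖xp - x‖) • (xp - x) + ψp‖ ≤ θ * ‖xp - x‖ ^ 2)
    (hg : ‖g - gradient f x‖ ≤ δg)
    (hB : ‖B - fderiv ℝ (gradient f) z‖ ≤ δB) :
    ‖gradient f xp + ψp‖ ≤
      (θ + (σ + L) / 2) * ‖xp - x‖ ^ 2 + (δB + L * ‖x - z‖) * ‖xp - x‖ + δg := by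
  set d : EuclideanSpace ℝ (Fin n) := xp - x with hd
  set r : ℝ := ‖xp - x‖ with hr
  set c : ℝ := ‖x - z‖ with hc
  have hr0 : 0 ≤ r := norm_nonneg _
  -- gradient f is C¹
  have hG1 : ContDiff ℝ 1 (gradient f) := by
    have h1 : ContDiff ℝ 1 (fderiv ℝ f) := hf.fderiv_right (by norm_num)
    have : gradient f = fun y => (InnerProductSpace.toDual ℝ (EuclideanSpace ℝ (Fin n))).symm (fderiv ℝ f y) := rfl
    rw [this]
    exact (InnerProductSpace.toDual ℝ (EuclideanSpace ℝ (Fin n))).symm.contDiff.comp h1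
  have hGdiff : Differentiable ℝ (gradient f) := hG1.differentiable one_ne_zero
  have hDcont : Continuous (fun y => fderiv ℝ (gradient f) y) :=
    (hG1.fderiv_right (m := 0) (by norm_num)).continuous
  -- derivative along the segment
  have hline : ∀ t : ℝ, HasDerivAt (fun t => gradient f (x + t • d))
      (fderiv ℝ (gradient f) (x + t • d) d) t := by
    intro t
    have h1 : HasDerivAt (fun t : ℝ => x + t • d) d t := by
      simpa using ((hasDerivAt_id t).smul_const d).const_add x
    have h2 := (hGdiff (x + t • d)).hasFDerivAt
    exact h2.comp_hasDerivAt t h1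
  have hcont : Continuous (fun t : ℝ => fderiv ℝ (gradient f) (x + t • d) d) := by
    exact (hDcont.comp (continuous_const.add (continuous_id.smul continuous_const))).clm_apply
      continuous_const
  have hkey : (∫ t in (0:ℝ)..1, fderiv ℝ (gradient f) (x + t • d) d)
      = gradient f xp - gradient f x := by
    have h := intervalIntegral.integral_eq_sub_of_hasDerivAt (fun t _ => hline t)
      (hcont.intervalIntegrable 0 1)
    have e1 : x + (1:ℝ) • d = xp := by simp [hd]
    have e0 : x + (0:ℝ) • d = x := by simp
    rw [h, e1, e0]
  -- Taylor-type bound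
  have hTaylor : ‖gradient f xp - gradient f x - fderiv ℝ (gradient f) z d‖
      ≤ L * r * r / 2 + L * c * r := by
    have hconst : (∫ t in (0:ℝ)..1, fderiv ℝ (gradient f) z d)
        = fderiv ℝ (gradient f) z d := by simp
    have hsub : gradient f xp - gradient f x - fderiv ℝ (gradient f) z d
        = ∫ t in (0:ℝ)..1,
            (fderiv ℝ (gradient f) (x + t • d) d - fderiv ℝ (gradient f) z d) := by
      rw [intervalIntegral.integral_sub (hcont.intervalIntegrable 0 1)
        (intervalIntegrable_const), hkey, hconst]
    rw [hsub]
    have hbound : ∀ t ∈ Set.Ioc (0:ℝ) 1,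
        ‖fderiv ℝ (gradient f) (x + t • d) d - fderiv ℝ (gradient f) z d‖
          ≤ L * (t * r + c) * r := by
      intro t ht
      have h1 : fderiv ℝ (gradient f) (x + t • d) d - fderiv ℝ (gradient f) z d
          = (fderiv ℝ (gradient f) (x + t • d) - fderiv ℝ (gradient f) z) d := rfl
      rw [h1]
      calc ‖(fderiv ℝ (gradient f) (x + t • d) - fderiv ℝ (gradient f) z) d‖
          ≤ ‖fderiv ℝ (gradient f) (x + t • d) - fderiv ℝ (gradient f) z‖ * ‖d‖ :=
            ContinuousLinearMap.le_opNorm _ _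
        _ ≤ (L * ‖(x + t • d) - z‖) * ‖d‖ := by
            exact mul_le_mul_of_nonneg_right (hLip z (x + t • d)) (norm_nonneg _)
        _ ≤ L * (t * r + c) * r := by
            have h2 : (x + t • d) - z = t • d + (x - z) := by abel
            have h3 : ‖(x + t • d) - z‖ ≤ t * r + c := by
              rw [h2]
              calc ‖t • d + (x - z)‖ ≤ ‖t • d‖ + ‖x - z‖ := norm_add_le _ _
                _ = t * r + c := by
                    rw [norm_smul, Real.norm_eq_abs, abs_of_pos ht.1, hr, hd, hc]
            have h4 : ‖d‖ = r := by rw [hd, hr]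
            rw [h4]
            have : L * ‖(x + t • d) - z‖ ≤ L * (t * r + c) :=
              mul_le_mul_of_nonneg_left h3 hL
            exact mul_le_mul_of_nonneg_right this hr0
    have hIb : IntervalIntegrable (fun t : ℝ => L * (t * r + c) * r) MeasureTheory.volume 0 1 :=
      (Continuous.intervalIntegrable
        ((continuous_const.mul ((continuous_id.mul continuous_const).add
          continuous_const)).mul continuous_const)) 0 1
    have hval : (∫ t in (0:ℝ)..1, L * (t * r + c) * r) = L * r * r / 2 + L * c * r := by
      have heq : (fun t : ℝ => L * (t * r + c) * r)
          = fun t : ℝ => (L * r * r) * t + L * c * r := by funext t; ring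
      rw [heq, intervalIntegral.integral_add
        ((Continuous.intervalIntegrable (by fun_prop)) 0 1) intervalIntegrable_const,
        intervalIntegral.integral_const_mul, integral_id, intervalIntegral.integral_const]
      norm_num [mul_one_div]
    have hae : ∀ᵐ t ∂(MeasureTheory.volume.restrict (Set.uIoc (0:ℝ) 1)),
        ‖fderiv ℝ (gradient f) (x + t • d) d - fderiv ℝ (gradient f) z d‖
          ≤ L * (t * r + c) * r := by
      rw [MeasureTheory.ae_restrict_iff' measurableSet_uIoc]
      filter_upwards with t ht
      rw [Set.uIoc_of_le (by norm_num : (0:ℝ) ≤ 1)] at ht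
      exact hbound t ht
    calc ‖∫ t in (0:ℝ)..1,
          (fderiv ℝ (gradient f) (x + t • d) d - fderiv ℝ (gradient f) z d)‖
        ≤ |∫ t in (0:ℝ)..1, L * (t * r + c) * r| :=
          intervalIntegral.norm_integral_le_abs_of_norm_le hae hIb
      _ = L * r * r / 2 + L * c * r := by
          rw [hval]; exact abs_of_nonneg (by positivity)
  -- decomposition
  have hdecomp : gradient f xp + ψp =
      (g + B d + (σ / 2 * ‖d‖) • d + ψp)
      + (gradient f xp - gradient f x - fderiv ℝ (gradient f) z d)
      + (gradient f x - g)
      + (fderiv ℝ (gradient f) z d - B d)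
      - (σ / 2 * ‖d‖) • d := by abel
  have hb1 : ‖g + B d + (σ / 2 * ‖d‖) • d + ψp‖ ≤ θ * r ^ 2 := by
    simpa [hd, hr] using hmodel
  have hb3 : ‖gradient f x - g‖ ≤ δg := by rwa [norm_sub_rev]
  have hb4 : ‖fderiv ℝ (gradient f) z d - B d‖ ≤ δB * r := by
    have h1 : fderiv ℝ (gradient f) z d - B d = (fderiv ℝ (gradient f) z - B) d := rfl
    rw [h1]
    calc ‖(fderiv ℝ (gradient f) z - B) d‖
        ≤ ‖fderiv ℝ (gradient f) z - B‖ * ‖d‖ := ContinuousLinearMap.le_opNorm _ _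
      _ ≤ δB * r := by
          rw [norm_sub_rev]
          have h4 : ‖d‖ = r := by rw [hd, hr]
          rw [h4]
          exact mul_le_mul_of_nonneg_right hB hr0
  have hb5 : ‖(σ / 2 * ‖d‖) • d‖ = σ / 2 * r * r := by
    rw [norm_smul, Real.norm_eq_abs, abs_of_nonneg (by positivity), hd, hr]
  have hfin : ‖gradient f xp + ψp‖ ≤
      ‖g + B d + (σ / 2 * ‖d‖) • d + ψp‖
      + ‖gradient f xp - gradient f x - fderiv ℝ (gradient f) z d‖
      + ‖gradient f x - g‖
      + ‖fderiv ℝ (gradient f) z d - B d‖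
      + ‖(σ / 2 * ‖d‖) • d‖ := by
    rw [hdecomp]; exact norm_five _ _ _ _ _
  have hr2 : r ^ 2 = r * r := sq r
  rw [hb5] at hfin
  calc ‖gradient f xp + ψp‖
      ≤ θ * r ^ 2 + (L * r * r / 2 + L * c * r) + δg + δB * r + σ / 2 * r * r := by
        refine hfin.trans ?_
        gcongr
    _ = (θ + (σ + L) / 2) * r ^ 2 + (δB + L * c) * r + δg := by rw [hr2]; ring
end

section
/- Let x ∈ Q, z ∈ ℝⁿ, σ > 0, and let x⁺ ∈ Q satisfy the model-decrease condition M_{x,σ}(x⁺) + ψ(x⁺) ≤ F(x). Suppose ‖g − ∇f(x)‖ ≤ δ_g and ‖B − ∇²f(z)‖ ≤ δ_B for some δ_g, δ_B ≥ 0. Then, with r := ‖x⁺ − x‖, one has F(x) − F(x⁺) ≥ ((σ − L)/6)·r³ − (1/2)(δ_B + L‖x − z‖)·r² − δ_g·r. -/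
open RealInnerProductSpace
open Set

section Taylor
variable {E : Type*} [NormedAddCommGroup E] [InnerProductSpace ℝ E] [CompleteSpace E]

lemma taylor2_aux (f : E → ℝ) (L : ℝ) (hL : 0 ≤ L) (hf : ContDiff ℝ 2 f)
    (hLip : ∀ u v : E, ‖fderiv ℝ (gradient f) v - fderiv ℝ (gradient f) u‖ ≤ L * ‖v - u‖)
    (x y : E) :
    f y ≤ f x + ⟪gradient f x, y - x⟫ +
      1 / 2 * ⟪(fderiv ℝ (gradient f) x) (y - x), y - x⟫ + L / 6 * ‖y - x‖ ^ 3 := by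
  set h : E := y - x with hh
  have hfd : Differentiable ℝ f := hf.differentiable two_ne_zero
  have hgrad : Differentiable ℝ (gradient f) := by
    have h1 : ContDiff ℝ 1 (fderiv ℝ f) := hf.fderiv_right (by norm_num)
    have : gradient f = fun u => (InnerProductSpace.toDual ℝ E).symm (fderiv ℝ f u) := rfl
    rw [this]
    exact fun u => ((InnerProductSpace.toDual ℝ E).symm.toContinuousLinearEquiv.differentiableAt).comp u (h1.differentiable one_ne_zero u)
  have keyB : ∀ u v : E, fderiv ℝ f u v = ⟪gradient f u, v⟫ := by
    intro u v
    have := ((hfd u).hasGradientAt).hasFDerivAt.fderiv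
    rw [this, InnerProductSpace.toDual_apply_apply]
  set Hx := fderiv ℝ (gradient f) x with hHx
  have hline : ∀ t : ℝ, HasDerivAt (fun t : ℝ => x + t • h) h t := by
    intro t
    simpa using ((hasDerivAt_id t).smul_const h).const_add x
  -- ρ and its derivative
  set ρ : ℝ → ℝ := fun t => ⟪gradient f (x + t • h) - gradient f x - t • (Hx h), h⟫ with hρ
  have hvd : ∀ t : ℝ, HasDerivAt
      (fun t : ℝ => gradient f (x + t • h) - gradient f x - t • (Hx h))
      ((fderiv ℝ (gradient f) (x + t • h)) h - Hx h) t := by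
    intro t
    have h1 : HasDerivAt (fun t : ℝ => gradient f (x + t • h))
        ((fderiv ℝ (gradient f) (x + t • h)) h) t :=
      by have := ((hgrad (x + t • h)).hasFDerivAt).comp_hasDerivAt t (hline t); exact this
    have := (h1.sub_const (gradient f x)).sub ((hasDerivAt_id t).smul_const (Hx h)); rw [one_smul] at this; exact this
  have hρd : ∀ t : ℝ, HasDerivAt ρ
      ⟪(fderiv ℝ (gradient f) (x + t • h)) h - Hx h, h⟫ t := by
    intro t
    simpa using (hvd t).inner (𝕜 := ℝ) (hasDerivAt_const t h)
  have hρbound : ∀ t ∈ Ico (0:ℝ) 1,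
      ‖⟪(fderiv ℝ (gradient f) (x + t • h)) h - Hx h, h⟫‖ ≤ (L * ‖h‖ ^ 3 / 2) * (2 * t ^ 1) := by
    intro t ht
    have h1 : ‖(fderiv ℝ (gradient f) (x + t • h)) h - Hx h‖ ≤ (L * (t * ‖h‖)) * ‖h‖ := by
      have h2 : ‖fderiv ℝ (gradient f) (x + t • h) - Hx‖ ≤ L * ‖(x + t • h) - x‖ :=
        hLip x (x + t • h)
      have h3 : ‖(x + t • h) - x‖ = t * ‖h‖ := by
        rw [add_sub_cancel_left, norm_smul, Real.norm_eq_abs, abs_of_nonneg ht.1]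
      rw [h3] at h2
      calc ‖(fderiv ℝ (gradient f) (x + t • h)) h - Hx h‖
          = ‖(fderiv ℝ (gradient f) (x + t • h) - Hx) h‖ := by
            rw [ContinuousLinearMap.sub_apply]
        _ ≤ ‖fderiv ℝ (gradient f) (x + t • h) - Hx‖ * ‖h‖ :=
            ContinuousLinearMap.le_opNorm _ h
        _ ≤ (L * (t * ‖h‖)) * ‖h‖ := by
            exact mul_le_mul_of_nonneg_right h2 (norm_nonneg h)
    calc ‖⟪(fderiv ℝ (gradient f) (x + t • h)) h - Hx h, h⟫‖
        ≤ ‖(fderiv ℝ (gradient f) (x + t • h)) h - Hx h‖ * ‖h‖ := by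
          rw [Real.norm_eq_abs]; exact abs_real_inner_le_norm _ _
      _ ≤ ((L * (t * ‖h‖)) * ‖h‖) * ‖h‖ :=
          mul_le_mul_of_nonneg_right h1 (norm_nonneg h)
      _ = (L * ‖h‖ ^ 3 / 2) * (2 * t ^ 1) := by ring
  have hBder1 : ∀ t : ℝ, HasDerivAt (fun t : ℝ => (L * ‖h‖ ^ 3 / 2) * t ^ 2)
      ((L * ‖h‖ ^ 3 / 2) * (2 * t ^ 1)) t := by
    intro t
    simpa using (hasDerivAt_pow 2 t).const_mul (L * ‖h‖ ^ 3 / 2)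
  have step1 : ∀ t ∈ Icc (0:ℝ) 1, ‖ρ t‖ ≤ (L * ‖h‖ ^ 3 / 2) * t ^ 2 := by
    have h0 : ‖ρ 0‖ ≤ (L * ‖h‖ ^ 3 / 2) * (0:ℝ) ^ 2 := by
      simp [hρ]
    exact fun t ht => image_norm_le_of_norm_deriv_right_le_deriv_boundary
      (fun s _ => (hρd s).continuousAt.continuousWithinAt)
      (fun s _ => (hρd s).hasDerivWithinAt) h0 hBder1 hρbound ht
  -- η and its derivative
  set η : ℝ → ℝ := fun t => f (x + t • h) - f x - t * ⟪gradient f x, h⟫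
    - t ^ 2 / 2 * ⟪Hx h, h⟫ with hη
  have hηd : ∀ t : ℝ, HasDerivAt η (ρ t) t := by
    intro t
    have hφ : HasDerivAt (fun t : ℝ => f (x + t • h)) ⟪gradient f (x + t • h), h⟫ t := by
      have := ((hfd (x + t • h)).hasFDerivAt).comp_hasDerivAt t (hline t)
      rwa [keyB] at this
    have h2 : HasDerivAt (fun t : ℝ => t * ⟪gradient f x, h⟫) ⟪gradient f x, h⟫ t := by
      simpa using (hasDerivAt_id t).mul_const ⟪gradient f x, h⟫
    have h3 : HasDerivAt (fun t : ℝ => t ^ 2 / 2 * ⟪Hx h, h⟫) (t * ⟪Hx h, h⟫) t := by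
      have := (hasDerivAt_pow 2 t).div_const 2 |>.mul_const ⟪Hx h, h⟫
      simpa using this.congr_deriv (by push_cast; ring)
    have h4 := ((hφ.sub_const (f x)).sub h2).sub h3
    have h5 : ρ t = ⟪gradient f (x + t • h), h⟫ - ⟪gradient f x, h⟫ - t * ⟪Hx h, h⟫ := by
      simp [hρ, inner_sub_left, real_inner_smul_left]
    rw [h5]; exact h4
  have hBder2 : ∀ t : ℝ, HasDerivAt (fun t : ℝ => (L * ‖h‖ ^ 3 / 6) * t ^ 3)
      ((L * ‖h‖ ^ 3 / 6) * (3 * t ^ 2)) t := by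
    intro t
    simpa using (hasDerivAt_pow 3 t).const_mul (L * ‖h‖ ^ 3 / 6)
  have step2 : ‖η 1‖ ≤ (L * ‖h‖ ^ 3 / 6) * (1:ℝ) ^ 3 := by
    refine image_norm_le_of_norm_deriv_right_le_deriv_boundary
      (fun s _ => (hηd s).continuousAt.continuousWithinAt)
      (fun s _ => (hηd s).hasDerivWithinAt) ?_ hBder2 ?_ (by norm_num : (1:ℝ) ∈ Icc (0:ℝ) 1)
    · simp [hη]
    · intro t ht
      have := step1 t (Ico_subset_Icc_self ht)
      calc ‖ρ t‖ ≤ (L * ‖h‖ ^ 3 / 2) * t ^ 2 := this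
        _ = (L * ‖h‖ ^ 3 / 6) * (3 * t ^ 2) := by ring
  have hη1 : η 1 = f y - f x - ⟪gradient f x, h⟫ - 1 / 2 * ⟪Hx h, h⟫ := by
    have hxy : x + h = y := by rw [hh]; abel
    simp [hη, hxy]
  rw [hη1, Real.norm_eq_abs] at step2
  have := abs_le.mp step2
  have h6 := this.2
  linarith [this.2]

end Taylor

/-- Lemma 2 of the paper: progress in the objective value after one
inexact cubic-regularized Newton step satisfying the model-decrease condition. -/
theorem stmt_1 {n : ℕ} (hn : 1 ≤ n)
    (f ψ : EuclideanSpace ℝ (Fin n) → ℝ) (Q : Set (EuclideanSpace ℝ (Fin n)))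
    (L : ℝ) (hL : 0 ≤ L)
    (hf : ContDiff ℝ 2 f)
    (hLip : ∀ u v : EuclideanSpace ℝ (Fin n),
      ‖fderiv ℝ (gradient f) v - fderiv ℝ (gradient f) u‖ ≤ L * ‖v - u‖)
    (hQconv : Convex ℝ Q) (hψ : ConvexOn ℝ Q ψ)
    (x : EuclideanSpace ℝ (Fin n)) (hx : x ∈ Q) (z : EuclideanSpace ℝ (Fin n))
    (σ δg δB : ℝ) (hσ : 0 < σ) (hδg : 0 ≤ δg) (hδB : 0 ≤ δB)
    (g : EuclideanSpace ℝ (Fin n))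
    (B : EuclideanSpace ℝ (Fin n) →L[ℝ] EuclideanSpace ℝ (Fin n))
    (hBsym : ∀ u v : EuclideanSpace ℝ (Fin n), ⟪B u, v⟫ = ⟪u, B v⟫)
    (xp : EuclideanSpace ℝ (Fin n)) (hxp : xp ∈ Q)
    (hdec : f x + ⟪g, xp - x⟫ + 1 / 2 * ⟪B (xp - x), xp - x⟫ + σ / 6 * ‖xp - x‖ ^ 3
      + ψ xp ≤ f x + ψ x)
    (hg : ‖g - gradient f x‖ ≤ δg)
    (hB : ‖B - fderiv ℝ (gradient f) z‖ ≤ δB) :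
    (f x + ψ x) - (f xp + ψ xp) ≥
      (σ - L) / 6 * ‖xp - x‖ ^ 3 - 1 / 2 * (δB + L * ‖x - z‖) * ‖xp - x‖ ^ 2
        - δg * ‖xp - x‖ := by
  set Hx := fderiv ℝ (gradient f) x with hHx
  set Hz := fderiv ℝ (gradient f) z with hHz
  have taylor := taylor2_aux f L hL hf hLip x xp
  rw [← hHx] at taylor
  have hBH : ‖B - Hx‖ ≤ δB + L * ‖x - z‖ := by
    have h1 : ‖Hx - Hz‖ ≤ L * ‖x - z‖ := hLip z x
    calc ‖B - Hx‖ = ‖(B - Hz) - (Hx - Hz)‖ := by congr 1; abel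
      _ ≤ ‖B - Hz‖ + ‖Hx - Hz‖ := norm_sub_le _ _
      _ ≤ δB + L * ‖x - z‖ := add_le_add hB h1
  have hD : ⟪B (xp - x), xp - x⟫ - ⟪Hx (xp - x), xp - x⟫
      ≥ -((δB + L * ‖x - z‖) * ‖xp - x‖ ^ 2) := by
    have e : ⟪B (xp - x), xp - x⟫ - ⟪Hx (xp - x), xp - x⟫
        = ⟪(B - Hx) (xp - x), xp - x⟫ := by
      rw [ContinuousLinearMap.sub_apply, inner_sub_left]
    have habs : |⟪(B - Hx) (xp - x), xp - x⟫| ≤ (δB + L * ‖x - z‖) * ‖xp - x‖ ^ 2 := by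
      calc |⟪(B - Hx) (xp - x), xp - x⟫| ≤ ‖(B - Hx) (xp - x)‖ * ‖xp - x‖ :=
            abs_real_inner_le_norm _ _
        _ ≤ (‖B - Hx‖ * ‖xp - x‖) * ‖xp - x‖ :=
            mul_le_mul_of_nonneg_right (ContinuousLinearMap.le_opNorm _ _) (norm_nonneg _)
        _ ≤ (δB + L * ‖x - z‖) * ‖xp - x‖ ^ 2 := by
            nlinarith [norm_nonneg (xp - x), mul_le_mul_of_nonneg_right
              (mul_le_mul_of_nonneg_right hBH (norm_nonneg (xp - x))) (norm_nonneg (xp - x))]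
    rw [e]
    linarith [neg_abs_le ⟪(B - Hx) (xp - x), xp - x⟫]
  have hginner : ⟪g, xp - x⟫ - ⟪gradient f x, xp - x⟫ ≥ -(δg * ‖xp - x‖) := by
    have e : ⟪g, xp - x⟫ - ⟪gradient f x, xp - x⟫ = ⟪g - gradient f x, xp - x⟫ :=
      (inner_sub_left _ _ _).symm
    have habs : |⟪g - gradient f x, xp - x⟫| ≤ δg * ‖xp - x‖ :=
      le_trans (abs_real_inner_le_norm _ _)
        (mul_le_mul_of_nonneg_right hg (norm_nonneg _))
    rw [e]
    linarith [neg_abs_le ⟪g - gradient f x, xp - x⟫]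
  linarith
end

section
/- Suppose ψ is twice differentiable. Let x ∈ Q, z ∈ ℝⁿ, θ ≥ 0, and let x⁺ ∈ Q satisfy the matrix inequality B + θ‖x⁺ − x‖·I + ∇²ψ(x⁺) ⪰ 0, where I is the identity matrix. Suppose ‖B − ∇²f(z)‖ ≤ δ_B for some δ_B ≥ 0. Then, with r := ‖x⁺ − x‖, the Hessian of F = f + ψ satisfies ∇²F(x⁺) ⪰ −((L + θ)r + L‖x − z‖ + δ_B)·I; equivalently, ξ(x⁺) ≤ (L + θ)r + L‖x − z‖ + δ_B. -/
open RealInnerProductSpace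

/-- Lemma 3 of the paper: lower bound on the Hessian of the composite
objective `F = f + ψ` at the new point, stated as `∇²F(x⁺) ⪰ −((L+θ)r + L‖x−z‖ + δ_B)·I`,
i.e. `ξ(x⁺) ≤ (L+θ)r + L‖x−z‖ + δ_B`. -/
theorem stmt_2 {n : ℕ} (hn : 1 ≤ n)
    (f ψ : EuclideanSpace ℝ (Fin n) → ℝ) (Q : Set (EuclideanSpace ℝ (Fin n)))
    (L : ℝ) (hL : 0 ≤ L)
    (hf : ContDiff ℝ 2 f)
    (hLip : ∀ u v : EuclideanSpace ℝ (Fin n),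
      ‖fderiv ℝ (gradient f) v - fderiv ℝ (gradient f) u‖ ≤ L * ‖v - u‖)
    (hψ2 : ContDiff ℝ 2 ψ) (hQconv : Convex ℝ Q) (hψconv : ConvexOn ℝ Q ψ)
    (x : EuclideanSpace ℝ (Fin n)) (hx : x ∈ Q) (z : EuclideanSpace ℝ (Fin n))
    (θ δB : ℝ) (hθ : 0 ≤ θ) (hδB : 0 ≤ δB)
    (B : EuclideanSpace ℝ (Fin n) →L[ℝ] EuclideanSpace ℝ (Fin n))
    (hBsym : ∀ u v : EuclideanSpace ℝ (Fin n), ⟪B u, v⟫ = ⟪u, B v⟫)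
    (xp : EuclideanSpace ℝ (Fin n)) (hxp : xp ∈ Q)
    (hPSD : ∀ v : EuclideanSpace ℝ (Fin n),
      0 ≤ ⟪B v, v⟫ + θ * ‖xp - x‖ * ‖v‖ ^ 2 + ⟪fderiv ℝ (gradient ψ) xp v, v⟫)
    (hB : ‖B - fderiv ℝ (gradient f) z‖ ≤ δB) :
    ∀ v : EuclideanSpace ℝ (Fin n),
      -((((L + θ) * ‖xp - x‖ + L * ‖x - z‖ + δB)) * ‖v‖ ^ 2) ≤
        ⟪fderiv ℝ (gradient (fun y => f y + ψ y)) xp v, v⟫ := by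
  have hfd : Differentiable ℝ f := hf.differentiable (by norm_num)
  have hψd : Differentiable ℝ ψ := hψ2.differentiable (by norm_num)
  -- gradient of sum = sum of gradients
  have hgradsum : gradient (fun y => f y + ψ y) = fun y => gradient f y + gradient ψ y := by
    funext y
    simp only [gradient, fderiv_fun_add (hfd y) (hψd y), map_add]
  -- differentiability of the gradients
  have hgradf : Differentiable ℝ (gradient f) := by
    have h1 : ContDiff ℝ 1 (fderiv ℝ f) := by
      have := hf.fderiv_right (m := 1) (by norm_num)
      exact this
    exact ((InnerProductSpace.toDual ℝ (EuclideanSpace ℝ (Fin n))).symm.differentiable.comp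
      (h1.differentiable one_ne_zero))
  have hgradψ : Differentiable ℝ (gradient ψ) := by
    have h1 : ContDiff ℝ 1 (fderiv ℝ ψ) := by
      have := hψ2.fderiv_right (m := 1) (by norm_num)
      exact this
    exact ((InnerProductSpace.toDual ℝ (EuclideanSpace ℝ (Fin n))).symm.differentiable.comp
      (h1.differentiable one_ne_zero))
  have hfderivsum : fderiv ℝ (gradient (fun y => f y + ψ y)) xp
      = fderiv ℝ (gradient f) xp + fderiv ℝ (gradient ψ) xp := by
    rw [hgradsum]
    exact fderiv_fun_add (hgradf xp) (hgradψ xp)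
  intro v
  set Hf := fderiv ℝ (gradient f) xp with hHf
  set Hψ := fderiv ℝ (gradient ψ) xp with hHψ
  rw [hfderivsum]
  have hsplit : ⟪(Hf + Hψ) v, v⟫ = ⟪Hf v, v⟫ + ⟪Hψ v, v⟫ := by
    simp [inner_add_left]
  rw [hsplit]
  have h1 := hPSD v
  -- bound ‖Hf - B‖
  have hnb : ‖Hf - B‖ ≤ L * ‖xp - x‖ + L * ‖x - z‖ + δB := by
    have h2 : ‖Hf - B‖ ≤ ‖Hf - fderiv ℝ (gradient f) z‖ + ‖fderiv ℝ (gradient f) z - B‖ := by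
      have := norm_sub_le_norm_sub_add_norm_sub Hf (fderiv ℝ (gradient f) z) B
      exact this
    have h3 : ‖Hf - fderiv ℝ (gradient f) z‖ ≤ L * ‖xp - z‖ := hLip z xp
    have h4 : ‖fderiv ℝ (gradient f) z - B‖ ≤ δB := by rwa [norm_sub_rev]
    have h5 : ‖xp - z‖ ≤ ‖xp - x‖ + ‖x - z‖ := by
      have : xp - z = (xp - x) + (x - z) := by abel
      rw [this]; exact norm_add_le _ _
    have h6 : L * ‖xp - z‖ ≤ L * (‖xp - x‖ + ‖x - z‖) := by
      exact mul_le_mul_of_nonneg_left h5 hL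
    nlinarith
  have hinner : |⟪(Hf - B) v, v⟫| ≤ ‖Hf - B‖ * ‖v‖ ^ 2 := by
    calc |⟪(Hf - B) v, v⟫| ≤ ‖(Hf - B) v‖ * ‖v‖ := abs_real_inner_le_norm _ _
      _ ≤ ‖Hf - B‖ * ‖v‖ * ‖v‖ :=
        mul_le_mul_of_nonneg_right ((Hf - B).le_opNorm v) (norm_nonneg v)
      _ = ‖Hf - B‖ * ‖v‖ ^ 2 := by ring
  have hdiff : ⟪(Hf - B) v, v⟫ = ⟪Hf v, v⟫ - ⟪B v, v⟫ := by
    simp [inner_sub_left]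
  have habs := abs_le.mp hinner
  have hvnn : (0:ℝ) ≤ ‖v‖ ^ 2 := by positivity
  have hmul : ‖Hf - B‖ * ‖v‖ ^ 2 ≤ (L * ‖xp - x‖ + L * ‖x - z‖ + δB) * ‖v‖ ^ 2 :=
    mul_le_mul_of_nonneg_right hnb hvnn
  nlinarith [habs.1, habs.2]
end

section
/- Let σ ≥ 2L, x ∈ Q, z ∈ ℝⁿ, and let x⁺ ∈ Q satisfy both ‖∇M_{x,σ}(x⁺) + ψ'(x⁺)‖ ≤ (σ/4)‖x⁺ − x‖² for some ψ'(x⁺) ∈ ∂ψ(x⁺), and M_{x,σ}(x⁺) + ψ(x⁺) ≤ F(x). Suppose ‖g − ∇f(x)‖ ≤ δ_g and ‖B − ∇²f(z)‖ ≤ δ_B for some δ_g, δ_B ≥ 0. Then F(x) − F(x⁺) ≥ (1/(192·σ^{1/2}))·‖∇f(x⁺) + ψ'(x⁺)‖^{3/2} + (σ/48)‖x⁺ − x‖³ − (171/σ²)(δ_B³ + L³‖x − z‖³) − (3/σ^{1/2})·δ_g^{3/2}. -/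
open RealInnerProductSpace

set_option maxHeartbeats 1000000


theorem grad_taylor {n : ℕ} (f : EuclideanSpace ℝ (Fin n) → ℝ) (L : ℝ)
    (hf : ContDiff ℝ 2 f)
    (hLip : ∀ u v : EuclideanSpace ℝ (Fin n),
      ‖fderiv ℝ (gradient f) v - fderiv ℝ (gradient f) u‖ ≤ L * ‖v - u‖)
    (x h : EuclideanSpace ℝ (Fin n)) :
    ∀ t ∈ Set.Icc (0:ℝ) 1,
      ‖gradient f (x + t • h) - gradient f x - t • (fderiv ℝ (gradient f) x h)‖
        ≤ L * ‖h‖^2 / 2 * t^2 := by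
  have hgc : ContDiff ℝ 1 (gradient f) := by
    have h1 : ContDiff ℝ 1 (fderiv ℝ f) := hf.fderiv_right (by norm_num)
    exact (InnerProductSpace.toDual ℝ _).symm.contDiff.comp h1
  have hgd : Differentiable ℝ (gradient f) := hgc.differentiable (by norm_num)
  set w : ℝ → EuclideanSpace ℝ (Fin n) := fun t =>
    gradient f (x + t • h) - gradient f x - t • (fderiv ℝ (gradient f) x h) with hw
  have hline : ∀ t : ℝ, HasDerivAt (fun s : ℝ => x + s • h) h t := by
    intro t
    simpa using ((hasDerivAt_id t).smul_const h).const_add x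
  have hwd : ∀ t : ℝ, HasDerivAt w
      (fderiv ℝ (gradient f) (x + t • h) h - fderiv ℝ (gradient f) x h) t := by
    intro t
    have h1 : HasDerivAt (fun s : ℝ => gradient f (x + s • h))
        (fderiv ℝ (gradient f) (x + t • h) h) t :=
      by have := ((hgd (x + t • h)).hasFDerivAt.comp_hasDerivAt t (hline t)); exact this
    have h2 : HasDerivAt (fun s : ℝ => s • (fderiv ℝ (gradient f) x h))
        (fderiv ℝ (gradient f) x h) t := by
      simpa using (hasDerivAt_id t).smul_const (fderiv ℝ (gradient f) x h)
    exact (h1.sub_const (gradient f x)).sub h2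
  have key := image_norm_le_of_norm_deriv_right_le_deriv_boundary
    (f := w) (a := 0) (b := 1)
    (f' := fun t => fderiv ℝ (gradient f) (x + t • h) h - fderiv ℝ (gradient f) x h)
    (fun t _ => ((hwd t).continuousAt).continuousWithinAt)
    (fun t _ => (hwd t).hasDerivWithinAt)
    (B := fun t => L * ‖h‖^2 / 2 * t^2) (B' := fun t => L * ‖h‖^2 * t)
    (by simp [hw])
    (by intro t
        have : HasDerivAt (fun t : ℝ => L * ‖h‖^2 / 2 * t^2) (L * ‖h‖^2 / 2 * (2*t)) t := by
          simpa using (hasDerivAt_pow 2 t).const_mul (L * ‖h‖^2 / 2)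
        convert this using 1; ring)
    (by intro t ht
        have h1 : ‖fderiv ℝ (gradient f) (x + t • h) h - fderiv ℝ (gradient f) x h‖
            ≤ ‖fderiv ℝ (gradient f) (x + t • h) - fderiv ℝ (gradient f) x‖ * ‖h‖ := by
          rw [← ContinuousLinearMap.sub_apply]
          exact (fderiv ℝ (gradient f) (x + t • h) - fderiv ℝ (gradient f) x).le_opNorm h
        have h2 := hLip x (x + t • h)
        have h3 : ‖x + t • h - x‖ = t * ‖h‖ := by
          simp [norm_smul, abs_of_nonneg ht.1]
        rw [h3] at h2
        calc ‖fderiv ℝ (gradient f) (x + t • h) h - fderiv ℝ (gradient f) x h‖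
            ≤ (L * (t * ‖h‖)) * ‖h‖ := h1.trans (mul_le_mul_of_nonneg_right h2 (norm_nonneg h))
          _ = L * ‖h‖^2 * t := by ring)
  intro t ht
  exact key ht


theorem fun_taylor {n : ℕ} (f : EuclideanSpace ℝ (Fin n) → ℝ) (L : ℝ) (hL : 0 ≤ L)
    (hf : ContDiff ℝ 2 f)
    (x h : EuclideanSpace ℝ (Fin n))
    (hG : ∀ t ∈ Set.Icc (0:ℝ) 1,
      ‖gradient f (x + t • h) - gradient f x - t • (fderiv ℝ (gradient f) x h)‖
        ≤ L * ‖h‖^2 / 2 * t^2) :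
    f (x + h) ≤ f x + ⟪gradient f x, h⟫ + 1/2 * ⟪fderiv ℝ (gradient f) x h, h⟫
      + L/6 * ‖h‖^3 := by
  have hfd : Differentiable ℝ f := hf.differentiable (by norm_num)
  have hinner : ∀ y v : EuclideanSpace ℝ (Fin n), fderiv ℝ f y v = ⟪gradient f y, v⟫ := by
    intro y v; rw [gradient]; exact (InnerProductSpace.toDual_symm_apply).symm
  have hline : ∀ t : ℝ, HasDerivAt (fun s : ℝ => x + s • h) h t := by
    intro t; simpa using ((hasDerivAt_id t).smul_const h).const_add x
  set u : ℝ → ℝ := fun t => f (x + t • h) - f x - t * ⟪gradient f x, h⟫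
      - t^2/2 * ⟪fderiv ℝ (gradient f) x h, h⟫ - L * ‖h‖^3/6 * t^3 with hu
  have hud : ∀ t : ℝ, HasDerivAt u
      (⟪gradient f (x + t • h), h⟫ - ⟪gradient f x, h⟫
        - t * ⟪fderiv ℝ (gradient f) x h, h⟫ - L * ‖h‖^3/2 * t^2) t := by
    intro t
    have h1 : HasDerivAt (fun s : ℝ => f (x + s • h)) (⟪gradient f (x + t • h), h⟫) t := by
      have := (hfd (x + t • h)).hasFDerivAt.comp_hasDerivAt t (hline t)
      rwa [hinner] at this
    have h2 : HasDerivAt (fun s : ℝ => s * ⟪gradient f x, h⟫) (⟪gradient f x, h⟫) t := by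
      simpa using (hasDerivAt_id t).mul_const (⟪gradient f x, h⟫ : ℝ)
    have h3 : HasDerivAt (fun s : ℝ => s^2/2 * ⟪fderiv ℝ (gradient f) x h, h⟫)
        (t * ⟪fderiv ℝ (gradient f) x h, h⟫) t := by
      have := ((hasDerivAt_pow 2 t).div_const 2).mul_const
        (⟪fderiv ℝ (gradient f) x h, h⟫ : ℝ)
      refine this.congr_deriv ?_; push_cast; ring
    have h4 : HasDerivAt (fun s : ℝ => L * ‖h‖^3/6 * s^3) (L * ‖h‖^3/2 * t^2) t := by
      have := (hasDerivAt_pow 3 t).const_mul (L * ‖h‖^3/6)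
      refine this.congr_deriv ?_; push_cast; ring
    exact (((h1.sub_const (f x)).sub h2).sub h3).sub h4
  have hder : ∀ t ∈ Set.Icc (0:ℝ) 1, deriv u t ≤ 0 := by
    intro t ht
    rw [(hud t).deriv]
    have h5 := hG t ht
    have h6 : ⟪gradient f (x + t • h) - gradient f x - t • (fderiv ℝ (gradient f) x h), h⟫
        ≤ L * ‖h‖^2/2 * t^2 * ‖h‖ :=
      (real_inner_le_norm _ _).trans (mul_le_mul_of_nonneg_right h5 (norm_nonneg h))
    rw [inner_sub_left, inner_sub_left, inner_smul_left] at h6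
    simp only [starRingEnd_apply, star_trivial] at h6
    have e : L * ‖h‖^2/2 * t^2 * ‖h‖ = L * ‖h‖^3/2 * t^2 := by ring
    linarith
  have hanti : AntitoneOn u (Set.Icc 0 1) := by
    apply antitoneOn_of_deriv_nonpos (convex_Icc 0 1)
    · exact fun t _ => ((hud t).differentiableAt).continuousAt.continuousWithinAt
    · exact fun t _ => ((hud t).differentiableAt).differentiableWithinAt
    · intro t ht
      exact hder t (Set.mem_Icc_of_Ioo (by simpa using ht))
  have h01 := hanti (Set.left_mem_Icc.2 zero_le_one) (Set.right_mem_Icc.2 zero_le_one) zero_le_one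
  simp only [hu] at h01
  simp only [zero_smul, add_zero, one_smul, zero_pow, one_pow] at h01
  nlinarith [h01]


lemma amgm1 (u b : ℝ) (hu : 0 ≤ u) (hb : 0 ≤ b) :
    48 * u^2 * b ≤ 128 * u^3 + b^3 := by
  nlinarith [mul_nonneg (sq_nonneg (b - 4*u)) (by linarith : (0:ℝ) ≤ b + 8*u)]

lemma amgm2 (D v : ℝ) (hD : 0 ≤ D) (hv : 0 ≤ v) :
    24 * D * v^2 ≤ v^3 + 2048 * D^3 := by
  nlinarith [mul_nonneg (sq_nonneg (v - 16*D)) (by linarith : (0:ℝ) ≤ v + 8*D)]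

lemma cube_add (a b : ℝ) (ha : 0 ≤ a) (hb : 0 ≤ b) : (a+b)^3 ≤ 4*a^3 + 4*b^3 := by
  nlinarith [mul_nonneg (sq_nonneg (a-b)) (by linarith : (0:ℝ) ≤ a + b)]

lemma two_term (a b : ℝ) (ha : 0 ≤ a) (hb : 0 ≤ b) :
    (a + b) * Real.sqrt (a + b) ≤ 2 * (a * Real.sqrt a + b * Real.sqrt b) := by
  have hsa := Real.sqrt_nonneg a
  have hsb := Real.sqrt_nonneg b
  have h1 : Real.sqrt (a + b) ≤ Real.sqrt a + Real.sqrt b := by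
    rw [show a + b = Real.sqrt a ^ 2 + Real.sqrt b ^ 2 by
      rw [Real.sq_sqrt ha, Real.sq_sqrt hb]]
    have := Real.sqrt_le_sqrt (show Real.sqrt a ^2 + Real.sqrt b ^2 ≤ (Real.sqrt a + Real.sqrt b)^2 by nlinarith [mul_nonneg hsa hsb])
    rwa [Real.sqrt_sq (by linarith)] at this
  have h2 : (a + b) * Real.sqrt (a + b) ≤ (a + b) * (Real.sqrt a + Real.sqrt b) :=
    mul_le_mul_of_nonneg_left h1 (by linarith)
  have ea : a = Real.sqrt a ^ 2 := (Real.sq_sqrt ha).symm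
  have eb : b = Real.sqrt b ^ 2 := (Real.sq_sqrt hb).symm
  nlinarith [mul_nonneg (sq_nonneg (Real.sqrt a - Real.sqrt b)) (by linarith : (0:ℝ) ≤ Real.sqrt a + Real.sqrt b)]

lemma sqrt_mono_mul (N M : ℝ) (hN : 0 ≤ N) (h : N ≤ M) :
    N * Real.sqrt N ≤ M * Real.sqrt M :=
  mul_le_mul h (Real.sqrt_le_sqrt h) (Real.sqrt_nonneg N) (by linarith)

lemma scalar_final (σ s r dg dB L t N P : ℝ)
    (hσ0 : 0 < σ) (hs : s = Real.sqrt σ)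
    (hr : 0 ≤ r) (hdg : 0 ≤ dg) (hdB : 0 ≤ dB) (hL : 0 ≤ L) (ht : 0 ≤ t)
    (hN0 : 0 ≤ N)
    (hN : N ≤ dg + (dB + L*t)*r + σ*r^2)
    (hP : P ≥ σ/12*r^3 - dg*r - 1/2*((dB + L*t)*r^2)) :
    P ≥ 1/(192*s) * (N * Real.sqrt N) + σ/48*r^3
      - 171/σ^2 * (dB^3 + L^3*t^3) - 3/s * (dg * Real.sqrt dg) := by
  set D := dB + L*t with hD
  have hD0 : 0 ≤ D := by positivity
  have hs0 : 0 < s := hs ▸ Real.sqrt_pos.2 hσ0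
  have hs2 : s^2 = σ := hs ▸ Real.sq_sqrt hσ0.le
  -- abbreviations
  set u := Real.sqrt dg with hu
  set X := D * Real.sqrt D with hX
  set Y := r * Real.sqrt r with hY
  have hu0 : 0 ≤ u := Real.sqrt_nonneg dg
  have hu2 : u^2 = dg := Real.sq_sqrt hdg
  have hX0 : 0 ≤ X := mul_nonneg hD0 (Real.sqrt_nonneg D)
  have hY0 : 0 ≤ Y := mul_nonneg hr (Real.sqrt_nonneg r)
  have hX2 : X^2 = D^3 := by
    rw [hX, mul_pow, Real.sq_sqrt hD0]; ring
  have hY2 : Y^2 = r^3 := by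
    rw [hY, mul_pow, Real.sq_sqrt hr]; ring
  -- decompose N * sqrt N
  have key1 : N * Real.sqrt N ≤ 4 * (dg * u) + 4 * (X * Y) + 2 * (s^3 * r^3) := by
    have m1 : N * Real.sqrt N ≤ (dg + D*r + σ*r^2) * Real.sqrt (dg + D*r + σ*r^2) :=
      sqrt_mono_mul N _ hN0 hN
    have m2 : (dg + D*r + σ*r^2) * Real.sqrt (dg + D*r + σ*r^2)
        ≤ 2 * ((dg + D*r) * Real.sqrt (dg + D*r) + (σ*r^2) * Real.sqrt (σ*r^2)) :=
      two_term _ _ (by positivity) (by positivity)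
    have m3 : (dg + D*r) * Real.sqrt (dg + D*r)
        ≤ 2 * (dg * Real.sqrt dg + (D*r) * Real.sqrt (D*r)) :=
      two_term _ _ hdg (by positivity)
    have m4 : Real.sqrt (D*r) = Real.sqrt D * Real.sqrt r := Real.sqrt_mul hD0 r
    have m5 : (σ*r^2) * Real.sqrt (σ*r^2) = s^3 * r^3 := by
      rw [show σ * r^2 = (s*r)^2 by rw [mul_pow, hs2], Real.sqrt_sq (by positivity)]
      ring
    have m6 : (D*r) * Real.sqrt (D*r) = X * Y := by rw [m4, hX, hY]; ring
    rw [m6] at m3; rw [m5] at m2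
    calc N * Real.sqrt N ≤ _ := m1
      _ ≤ _ := m2
      _ ≤ 4 * (dg * u) + 4 * (X * Y) + 2 * (s^3 * r^3) := by rw [hu]; linarith
  -- scaled versions
  have hs4 : σ^2 = s^4 := by rw [← hs2]; ring
  have K' : 1/(192*s)*(N*Real.sqrt N) ≤ 1/(48*s)*(dg*u) + 1/(48*s)*(X*Y) + σ/96*r^3 := by
    calc 1/(192*s)*(N*Real.sqrt N) = (N*Real.sqrt N)/(192*s) := by ring
      _ ≤ (4*(dg*u) + 4*(X*Y) + 2*(s^3*r^3))/(192*s) :=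
          (div_le_div_iff_of_pos_right (by positivity)).2 key1
      _ = 1/(48*s)*(dg*u) + 1/(48*s)*(X*Y) + σ/96*r^3 := by
          rw [← hs2]; field_simp; ring
  have Y1' : dg*r ≤ 8/(3*s)*(dg*u) + σ/48*r^3 := by
    have h0 := amgm1 u (s*r) hu0 (by positivity)
    calc dg*r = (48*u^2*(s*r))/(48*s) := by rw [hu2]; field_simp
      _ ≤ (128*u^3 + (s*r)^3)/(48*s) := (div_le_div_iff_of_pos_right (by positivity)).2 h0
      _ = 8/(3*s)*(dg*u) + σ/48*r^3 := by
          rw [← hu2, ← hs2]; field_simp; ring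
  have Y2' : 1/2*(D*r^2) ≤ σ/48*r^3 + (128/3)/σ^2*D^3 := by
    have h0 := amgm2 D (s^2*r) hD0 (by positivity)
    calc 1/2*(D*r^2) = (24*D*(s^2*r)^2)/(48*σ^2) := by rw [← hs2]; field_simp; ring
      _ ≤ ((s^2*r)^3 + 2048*D^3)/(48*σ^2) :=
          (div_le_div_iff_of_pos_right (by positivity)).2 h0
      _ = σ/48*r^3 + (128/3)/σ^2*D^3 := by rw [← hs2]; field_simp; ring
  have Y3' : 1/(48*s)*(X*Y) ≤ σ/192*r^3 + 1/(48*σ^2)*D^3 := by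
    have h0 : s^3*(X*Y) ≤ X^2 + s^6*Y^2/4 := by nlinarith [sq_nonneg (X - s^3*Y/2)]
    calc 1/(48*s)*(X*Y) = (s^3*(X*Y))/(48*s^4) := by field_simp
      _ ≤ (X^2 + s^6*Y^2/4)/(48*s^4) := (div_le_div_iff_of_pos_right (by positivity)).2 h0
      _ = σ/192*r^3 + 1/(48*σ^2)*D^3 := by
          rw [hX2, hY2, ← hs2]; field_simp; ring
  have C4' : (2049/48)/σ^2*D^3 ≤ 171/σ^2*(dB^3 + L^3*t^3) := by
    have h0 : D^3 ≤ 4*(dB^3 + L^3*t^3) := by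
      have := cube_add dB (L*t) hdB (by positivity)
      calc D^3 = (dB + L*t)^3 := by rw [hD]
        _ ≤ 4*dB^3 + 4*(L*t)^3 := this
        _ = 4*(dB^3 + L^3*t^3) := by ring
    calc (2049/48)/σ^2*D^3 ≤ (2049/48)/σ^2*(4*(dB^3 + L^3*t^3)) := by
          apply mul_le_mul_of_nonneg_left h0 (by positivity)
      _ ≤ 171/σ^2*(dB^3 + L^3*t^3) := by
          rw [← sub_nonneg]
          have : 171/σ^2*(dB^3 + L^3*t^3) - (2049/48)/σ^2*(4*(dB^3 + L^3*t^3))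
              = (1/4)/σ^2*(dB^3 + L^3*t^3) := by ring
          rw [this]; positivity
  -- slacks
  have S1 : 0 ≤ 1/s*(dg*u) := by positivity
  have S2 : 0 ≤ σ*r^3 := by positivity
  ring_nf at K' Y1' Y2' Y3' C4' S1 S2 hP ⊢
  linarith [K', Y1', Y2', Y3', C4', S1, S2, hP]


private lemma rpow_three_halves (a : ℝ) (ha : 0 ≤ a) :
    a ^ ((3:ℝ)/2) = a * Real.sqrt a := by
  rcases eq_or_lt_of_le ha with h | h
  · rw [← h]; simp [Real.zero_rpow (by norm_num : ((3:ℝ)/2) ≠ 0)]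
  · rw [Real.sqrt_eq_rpow, show (3:ℝ)/2 = 1 + 1/2 by norm_num, Real.rpow_add h,
      Real.rpow_one]

/-- first part of Theorem 1 of the paper: guaranteed functional progress of
one inexact cubic Newton step, in terms of the new (sub)gradient norm. -/
theorem stmt_3 {n : ℕ} (hn : 1 ≤ n)
    (f ψ : EuclideanSpace ℝ (Fin n) → ℝ) (Q : Set (EuclideanSpace ℝ (Fin n)))
    (L : ℝ) (hL : 0 ≤ L)
    (hf : ContDiff ℝ 2 f)
    (hLip : ∀ u v : EuclideanSpace ℝ (Fin n),
      ‖fderiv ℝ (gradient f) v - fderiv ℝ (gradient f) u‖ ≤ L * ‖v - u‖)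
    (hQconv : Convex ℝ Q) (hψ : ConvexOn ℝ Q ψ)
    (x : EuclideanSpace ℝ (Fin n)) (hx : x ∈ Q) (z : EuclideanSpace ℝ (Fin n))
    (σ δg δB : ℝ) (hσ : σ ≥ 2 * L) (hσ0 : 0 < σ) (hδg : 0 ≤ δg) (hδB : 0 ≤ δB)
    (g : EuclideanSpace ℝ (Fin n))
    (B : EuclideanSpace ℝ (Fin n) →L[ℝ] EuclideanSpace ℝ (Fin n))
    (hBsym : ∀ u v : EuclideanSpace ℝ (Fin n), ⟪B u, v⟫ = ⟪u, B v⟫)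
    (xp : EuclideanSpace ℝ (Fin n)) (hxp : xp ∈ Q)
    (ψp : EuclideanSpace ℝ (Fin n))
    (hψp : ∀ y : EuclideanSpace ℝ (Fin n), ψ xp + ⟪ψp, y - xp⟫ ≤ ψ y)
    (hmodel : ‖g + B (xp - x) + (σ / 2 * ‖xp - x‖) • (xp - x) + ψp‖ ≤ σ / 4 * ‖xp - x‖ ^ 2)
    (hdec : f x + ⟪g, xp - x⟫ + 1 / 2 * ⟪B (xp - x), xp - x⟫ + σ / 6 * ‖xp - x‖ ^ 3
      + ψ xp ≤ f x + ψ x)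
    (hg : ‖g - gradient f x‖ ≤ δg)
    (hB : ‖B - fderiv ℝ (gradient f) z‖ ≤ δB) :
    (f x + ψ x) - (f xp + ψ xp) ≥
      1 / (192 * Real.sqrt σ) * ‖gradient f xp + ψp‖ ^ ((3 : ℝ) / 2)
        + σ / 48 * ‖xp - x‖ ^ 3
        - 171 / σ ^ 2 * (δB ^ 3 + L ^ 3 * ‖x - z‖ ^ 3)
        - 3 / Real.sqrt σ * δg ^ ((3 : ℝ) / 2) := by
  have hG := grad_taylor f L hf hLip x (xp - x)
  have hFT := fun_taylor f L hL hf x (xp - x) hG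
  have hxpx : x + (xp - x) = xp := by abel
  rw [hxpx] at hFT
  set H := fderiv ℝ (gradient f) x with hH
  set r := ‖xp - x‖ with hr
  have hr0 : (0:ℝ) ≤ r := norm_nonneg _
  -- bound on ‖B - H‖
  have hBH : ‖B - H‖ ≤ δB + L * ‖x - z‖ := by
    have h1 : ‖fderiv ℝ (gradient f) z - H‖ ≤ L * ‖x - z‖ := by
      rw [hH, norm_sub_rev x z]
      exact hLip x z
    calc ‖B - H‖ = ‖(B - fderiv ℝ (gradient f) z) + (fderiv ℝ (gradient f) z - H)‖ := by
          congr 1; abel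
      _ ≤ ‖B - fderiv ℝ (gradient f) z‖ + ‖fderiv ℝ (gradient f) z - H‖ := norm_add_le _ _
      _ ≤ δB + L * ‖x - z‖ := add_le_add hB h1
  -- Step 1 : functional progress lower bound
  have hP : (f x + ψ x) - (f xp + ψ xp)
      ≥ σ/12*r^3 - δg*r - 1/2*((δB + L*‖x - z‖)*r^2) := by
    have e1 : (f x + ψ x) - (f xp + ψ xp)
        ≥ ⟪g, xp - x⟫ + 1/2 * ⟪B (xp - x), xp - x⟫ + σ/6 * r^3 + (f x - f xp) := by
      linarith [hdec]
    have e2 : f x - f xp ≥ - ⟪gradient f x, xp - x⟫ - 1/2 * ⟪H (xp - x), xp - x⟫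
        - L/6 * r^3 := by linarith [hFT]
    have e3 : ⟪g - gradient f x, xp - x⟫ ≥ -(δg * r) := by
      have := abs_real_inner_le_norm (g - gradient f x) (xp - x)
      have h2 : ‖g - gradient f x‖ * ‖xp - x‖ ≤ δg * r :=
        mul_le_mul_of_nonneg_right hg (norm_nonneg _)
      have := abs_le.1 this
      linarith [this.1]
    have e4 : ⟪B (xp - x) - H (xp - x), xp - x⟫ ≥ -((δB + L*‖x - z‖) * r^2) := by
      have h1 : ‖(B - H) (xp - x)‖ ≤ ‖B - H‖ * r := (B - H).le_opNorm _
      have h2 := abs_real_inner_le_norm ((B - H) (xp - x)) (xp - x)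
      have h3 : ‖(B - H) (xp - x)‖ * ‖xp - x‖ ≤ (δB + L*‖x - z‖) * r^2 := by
        have := mul_le_mul_of_nonneg_right (h1.trans
          (mul_le_mul_of_nonneg_right hBH hr0)) hr0
        calc ‖(B - H) (xp - x)‖ * ‖xp - x‖ ≤ (δB + L*‖x - z‖) * r * r := this
          _ = (δB + L*‖x - z‖) * r^2 := by ring
      have h4 := (abs_le.1 (h2.trans_eq rfl)).1
      have h5 : ⟪(B - H) (xp - x), xp - x⟫ = ⟪B (xp - x) - H (xp - x), xp - x⟫ := by
        rw [ContinuousLinearMap.sub_apply]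
      linarith [h4, h3, h5 ▸ h4]
    have e5 : ⟪B (xp - x) - H (xp - x), xp - x⟫
        = ⟪B (xp - x), xp - x⟫ - ⟪H (xp - x), xp - x⟫ := inner_sub_left _ _ _
    have e6 : ⟪g - gradient f x, xp - x⟫
        = ⟪g, xp - x⟫ - ⟪gradient f x, xp - x⟫ := inner_sub_left _ _ _
    have e7 : σ/6 - L/6 ≥ σ/12 := by linarith
    nlinarith [e1, e2, e3, e4, pow_nonneg hr0 3]
  -- Step 2 : bound on the new gradient
  have hGrad1 : ‖gradient f xp - gradient f x - H (xp - x)‖ ≤ L/2 * r^2 := by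
    have := hG 1 (Set.right_mem_Icc.2 zero_le_one)
    simp only [one_smul, one_pow, mul_one, hxpx] at this
    calc ‖gradient f xp - gradient f x - H (xp - x)‖
        ≤ L * ‖xp - x‖^2 / 2 * 1^2 := by simpa [hxpx] using hG 1 (Set.right_mem_Icc.2 zero_le_one)
      _ = L/2 * r^2 := by rw [← hr]; ring
  have hN : ‖gradient f xp + ψp‖ ≤ δg + (δB + L*‖x - z‖)*r + σ*r^2 := by
    have eid : gradient f xp + ψp
        = (gradient f xp - gradient f x - H (xp - x)) + (gradient f x - g)
          + (H (xp - x) - B (xp - x))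
          + (g + B (xp - x) + (σ / 2 * r) • (xp - x) + ψp)
          - (σ / 2 * r) • (xp - x) := by abel
    have n1 : ‖gradient f x - g‖ ≤ δg := by rwa [norm_sub_rev] at hg
    have n2 : ‖H (xp - x) - B (xp - x)‖ ≤ (δB + L*‖x - z‖) * r := by
      have h1 : ‖(H - B) (xp - x)‖ ≤ ‖H - B‖ * r := (H - B).le_opNorm _
      have h2 : ‖H - B‖ = ‖B - H‖ := norm_sub_rev _ _
      have h3 : ‖(H - B) (xp - x)‖ = ‖H (xp - x) - B (xp - x)‖ := by
        rw [ContinuousLinearMap.sub_apply]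
      rw [← h3]
      exact h1.trans (mul_le_mul_of_nonneg_right (h2 ▸ hBH) hr0)
    have n3 : ‖(σ / 2 * r) • (xp - x)‖ = σ/2 * r^2 := by
      rw [norm_smul, Real.norm_eq_abs, abs_of_nonneg (by positivity), ← hr]; ring
    have t1 : ‖(gradient f xp - gradient f x - H (xp - x)) + (gradient f x - g)
          + (H (xp - x) - B (xp - x))‖
        ≤ L/2 * r^2 + δg + (δB + L*‖x - z‖) * r :=
      norm_add₃_le.trans (add_le_add (add_le_add hGrad1 n1) n2)
    calc ‖gradient f xp + ψp‖
        = ‖(gradient f xp - gradient f x - H (xp - x)) + (gradient f x - g)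
          + (H (xp - x) - B (xp - x))
          + (g + B (xp - x) + (σ / 2 * r) • (xp - x) + ψp)
          - (σ / 2 * r) • (xp - x)‖ := by rw [← eid]
      _ ≤ ‖(gradient f xp - gradient f x - H (xp - x)) + (gradient f x - g)
          + (H (xp - x) - B (xp - x))
          + (g + B (xp - x) + (σ / 2 * r) • (xp - x) + ψp)‖
          + ‖(σ / 2 * r) • (xp - x)‖ := norm_sub_le _ _
      _ ≤ (‖(gradient f xp - gradient f x - H (xp - x)) + (gradient f x - g)
          + (H (xp - x) - B (xp - x))‖
          + ‖g + B (xp - x) + (σ / 2 * r) • (xp - x) + ψp‖)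
          + ‖(σ / 2 * r) • (xp - x)‖ := by
            gcongr
            exact norm_add_le _ _
      _ ≤ ((L/2 * r^2 + δg + (δB + L*‖x - z‖) * r) + σ/4 * r^2) + σ/2 * r^2 := by
            rw [n3]
            exact add_le_add (add_le_add t1 hmodel) le_rfl
      _ ≤ δg + (δB + L*‖x - z‖)*r + σ*r^2 := by nlinarith [sq_nonneg r]
  have fin := scalar_final σ (Real.sqrt σ) r δg δB L ‖x - z‖ ‖gradient f xp + ψp‖
    ((f x + ψ x) - (f xp + ψ xp)) hσ0 rfl hr0 hδg hδB hL (norm_nonneg _)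
    (norm_nonneg _) hN hP
  rw [rpow_three_halves _ (norm_nonneg _), rpow_three_halves _ hδg]
  exact fin
end

section
/- Suppose the Hessian of f is L-Lipschitz. Given x̄ ∈ ℝⁿ and h > 0, let A be the n×n matrix whose i-th column is (∇f(x̄ + h·e_i) − ∇f(x̄))/h, for i = 1, …, n. Then the symmetrized matrix B = (A + Aᵀ)/2 satisfies ‖B − ∇²f(x̄)‖ ≤ (√n · L / 2)·h in the spectral norm. -/
open RealInnerProductSpace Matrix

section Aux

variable {n : ℕ}

lemma euclid_apply_eq (M : Matrix (Fin n) (Fin n) ℝ) (x : EuclideanSpace ℝ (Fin n)) (i : Fin n) :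
    Matrix.toEuclideanCLM (𝕜 := ℝ) M x i = ∑ j, M i j * x j := rfl

lemma euclid_norm_sq (x : EuclideanSpace ℝ (Fin n)) : ‖x‖ ^ 2 = ∑ i, (x i) ^ 2 := by
  rw [EuclideanSpace.norm_eq, Real.sq_sqrt (by positivity)]
  simp [sq_abs]

lemma frob_bound (M : Matrix (Fin n) (Fin n) ℝ) :
    ‖Matrix.toEuclideanCLM (𝕜 := ℝ) M‖ ≤ Real.sqrt (∑ i, ∑ j, (M i j) ^ 2) := by
  apply ContinuousLinearMap.opNorm_le_bound _ (Real.sqrt_nonneg _)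
  intro x
  have h1 : ‖Matrix.toEuclideanCLM (𝕜 := ℝ) M x‖ ^ 2 ≤ (∑ i, ∑ j, (M i j) ^ 2) * ‖x‖ ^ 2 := by
    rw [euclid_norm_sq, euclid_norm_sq, Finset.sum_mul]
    refine Finset.sum_le_sum fun i _ => ?_
    rw [euclid_apply_eq]
    exact Finset.sum_mul_sq_le_sq_mul_sq _ _ _
  calc ‖Matrix.toEuclideanCLM (𝕜 := ℝ) M x‖
      = Real.sqrt (‖Matrix.toEuclideanCLM (𝕜 := ℝ) M x‖ ^ 2) :=
        (Real.sqrt_sq (norm_nonneg _)).symm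
    _ ≤ Real.sqrt ((∑ i, ∑ j, (M i j) ^ 2) * ‖x‖ ^ 2) := Real.sqrt_le_sqrt h1
    _ = Real.sqrt (∑ i, ∑ j, (M i j) ^ 2) * ‖x‖ := by
        rw [Real.sqrt_mul (by positivity), Real.sqrt_sq (norm_nonneg _)]

lemma matrix_two_inv_smul : (2 : Matrix (Fin n) (Fin n) ℝ)⁻¹ = (2 : ℝ)⁻¹ • (1 : Matrix (Fin n) (Fin n) ℝ) := by
  have h2 : (2 : Matrix (Fin n) (Fin n) ℝ) = (2 : ℝ) • (1 : Matrix (Fin n) (Fin n) ℝ) := by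
    rw [two_smul, one_add_one_eq_two]
  apply Matrix.inv_eq_right_inv
  rw [h2, smul_mul_assoc, one_mul, smul_smul]
  norm_num

noncomputable def isoDual (n : ℕ) :
    StrongDual ℝ (EuclideanSpace ℝ (Fin n)) ≃L[ℝ] EuclideanSpace ℝ (Fin n) :=
  (InnerProductSpace.toDual ℝ (EuclideanSpace ℝ (Fin n))).toContinuousLinearEquiv.symm

end Aux

set_option maxHeartbeats 1000000 in
set_option synthInstance.maxHeartbeats 400000 in
/-- Lemma 4 of the paper: spectral-norm error of the symmetrized
finite-difference-of-gradients approximation of the Hessian. -/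
theorem stmt_5 {n : ℕ} (hn : 1 ≤ n)
    (f : EuclideanSpace ℝ (Fin n) → ℝ)
    (L : ℝ) (hL : 0 ≤ L)
    (hf : ContDiff ℝ 2 f)
    (hLip : ∀ u v : EuclideanSpace ℝ (Fin n),
      ‖fderiv ℝ (gradient f) v - fderiv ℝ (gradient f) u‖ ≤ L * ‖v - u‖)
    (xbar : EuclideanSpace ℝ (Fin n)) (h : ℝ) (hh : 0 < h)
    (A : Matrix (Fin n) (Fin n) ℝ)
    (hA : ∀ i j : Fin n, A i j =
      (gradient f (xbar + h • EuclideanSpace.single j 1) i - gradient f xbar i) / h)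
    (B : Matrix (Fin n) (Fin n) ℝ) (hBdef : B = (A + Aᵀ) / 2) :
    ‖Matrix.toEuclideanCLM (𝕜 := ℝ) B - fderiv ℝ (gradient f) xbar‖ ≤
      Real.sqrt n * L / 2 * h := by
  classical
  have hfd : Differentiable ℝ f := hf.differentiable two_ne_zero
  have hf1 : ContDiff ℝ 1 (fderiv ℝ f) := hf.fderiv_right (by norm_num)
  have hgradcomp : gradient f = ⇑(isoDual n) ∘ (fderiv ℝ f) := rfl
  have hdg : Differentiable ℝ (gradient f) := by
    rw [hgradcomp]
    exact (isoDual n).differentiable.comp (hf1.differentiable one_ne_zero)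
  set H : EuclideanSpace ℝ (Fin n) →L[ℝ] EuclideanSpace ℝ (Fin n) :=
    fderiv ℝ (gradient f) xbar with hH
  -- the second derivative is symmetric
  have hinner : ∀ u v : EuclideanSpace ℝ (Fin n),
      ⟪H u, v⟫ = fderiv ℝ (fderiv ℝ f) xbar u v := by
    have hc : H = ((isoDual n :
            StrongDual ℝ (EuclideanSpace ℝ (Fin n)) →L[ℝ] EuclideanSpace ℝ (Fin n))).comp
          (fderiv ℝ (fderiv ℝ f) xbar) := by
      rw [hH, hgradcomp]
      exact (isoDual n).comp_fderiv
    intro u v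
    rw [hc]
    have heval : ((isoDual n :
            StrongDual ℝ (EuclideanSpace ℝ (Fin n)) →L[ℝ] EuclideanSpace ℝ (Fin n))).comp
          (fderiv ℝ (fderiv ℝ f) xbar) u
        = (InnerProductSpace.toDual ℝ (EuclideanSpace ℝ (Fin n))).symm
            (fderiv ℝ (fderiv ℝ f) xbar u) := rfl
    rw [heval]
    exact InnerProductSpace.toDual_symm_apply
  have hsym : ∀ u v : EuclideanSpace ℝ (Fin n), ⟪H u, v⟫ = ⟪H v, u⟫ := by
    intro u v
    rw [hinner, hinner]
    exact second_derivative_symmetric (f' := fderiv ℝ f)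
      (fun y => (hfd y).hasFDerivAt) ((hf1.differentiable one_ne_zero xbar).hasFDerivAt) u v
  set Hmat : Matrix (Fin n) (Fin n) ℝ :=
    Matrix.of (fun i j => H (EuclideanSpace.single j 1) i) with hHmatdef
  have hHmat_apply : ∀ i j, Hmat i j = H (EuclideanSpace.single j 1) i := fun i j => rfl
  have hHmat_symm : ∀ i j, Hmat i j = Hmat j i := by
    intro i j
    have e1 : Hmat i j = ⟪H (EuclideanSpace.single j 1), EuclideanSpace.single i 1⟫ := by
      rw [real_inner_comm, EuclideanSpace.inner_single_left]
      simp [hHmat_apply]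
    have e2 : Hmat j i = ⟪H (EuclideanSpace.single i 1), EuclideanSpace.single j 1⟫ := by
      rw [real_inner_comm, EuclideanSpace.inner_single_left]
      simp [hHmat_apply]
    rw [e1, e2, hsym]
  -- the matrix Hmat represents H
  have hHeq : Matrix.toEuclideanCLM (𝕜 := ℝ) Hmat = H := by
    apply ContinuousLinearMap.coe_injective
    apply Module.Basis.ext (EuclideanSpace.basisFun (Fin n) ℝ).toBasis
    intro j
    have hb : ((EuclideanSpace.basisFun (Fin n) ℝ).toBasis j : EuclideanSpace ℝ (Fin n))
        = EuclideanSpace.single j 1 := by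
      simp [EuclideanSpace.basisFun_apply]
    rw [hb]
    show Matrix.toEuclideanCLM (𝕜 := ℝ) Hmat (EuclideanSpace.single j 1)
        = H (EuclideanSpace.single j 1)
    refine PiLp.ext fun i => ?_
    rw [euclid_apply_eq]
    rw [Finset.sum_eq_single j]
    · simp [hHmat_apply]
    · intro k _ hk
      simp [EuclideanSpace.single_apply, hk]
    · simp
  -- per-column estimate
  have colbound : ∀ j : Fin n, ∑ i, (A i j - Hmat i j) ^ 2 ≤ (L * h / 2) ^ 2 := by
    intro j
    set w : EuclideanSpace ℝ (Fin n) := h • EuclideanSpace.single j 1 with hwdef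
    have hw : ‖w‖ = h := by
      rw [hwdef, norm_smul, EuclideanSpace.norm_single]
      simp [abs_of_pos hh]
    have hderiv : ∀ t : ℝ, HasDerivAt (fun s : ℝ => gradient f (xbar + s • w))
        ((fderiv ℝ (gradient f) (xbar + t • w)) w) t := by
      intro t
      have hline : HasDerivAt (fun s : ℝ => xbar + s • w) w t := by
        simpa using ((hasDerivAt_id t).smul_const w).const_add xbar
      exact (hdg (xbar + t • w)).hasFDerivAt.comp_hasDerivAt t hline
    have hHcont : Continuous fun y : EuclideanSpace ℝ (Fin n) => fderiv ℝ (gradient f) y := by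
      apply (LipschitzWith.of_dist_le_mul (K := L.toNNReal) ?_).continuous
      intro u v
      rw [dist_eq_norm, dist_eq_norm, Real.coe_toNNReal L hL]
      exact hLip v u
    have hcont : Continuous fun t : ℝ => (fderiv ℝ (gradient f) (xbar + t • w)) w :=
      (hHcont.comp (continuous_const.add (continuous_id.smul continuous_const))).clm_apply
        continuous_const
    have hFTC : ∫ t in (0:ℝ)..1, (fderiv ℝ (gradient f) (xbar + t • w)) w
        = gradient f (xbar + w) - gradient f xbar := by
      have := intervalIntegral.integral_eq_sub_of_hasDerivAt
        (f := fun s : ℝ => gradient f (xbar + s • w)) (f' := fun t =>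
          (fderiv ℝ (gradient f) (xbar + t • w)) w)
        (fun t _ => hderiv t) (hcont.intervalIntegrable 0 1)
      simpa using this
    set d : EuclideanSpace ℝ (Fin n) :=
      (WithLp.equiv 2 _).symm (fun i => A i j - Hmat i j) with hddef
    have hdi : ∀ i, d i = A i j - Hmat i j := fun i => rfl
    have hdval : d = h⁻¹ • ((gradient f (xbar + w) - gradient f xbar) - H w) := by
      refine PiLp.ext fun i => ?_
      have hHw : H w i = h * Hmat i j := by
        rw [hwdef, ContinuousLinearMap.map_smul]
        simp [hHmat_apply, PiLp.smul_apply, smul_eq_mul]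
      show d i = h⁻¹ * ((gradient f (xbar + w) i - gradient f xbar i) - H w i)
      rw [hdi, hHw, hA i j, hwdef]
      field_simp
    have hsplit : (gradient f (xbar + w) - gradient f xbar) - H w
        = ∫ t in (0:ℝ)..1, ((fderiv ℝ (gradient f) (xbar + t • w)) w - H w) := by
      rw [intervalIntegral.integral_sub (hcont.intervalIntegrable 0 1)
        (intervalIntegrable_const), hFTC, intervalIntegral.integral_const]
      simp
    have hb : ‖∫ t in (0:ℝ)..1, ((fderiv ℝ (gradient f) (xbar + t • w)) w - H w)‖
        ≤ L * h ^ 2 / 2 := by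
      have key := intervalIntegral.norm_integral_le_of_norm_le
        (μ := MeasureTheory.volume) (a := (0:ℝ)) (b := 1)
        (f := fun t => (fderiv ℝ (gradient f) (xbar + t • w)) w - H w)
        (g := fun t => L * h ^ 2 * t) zero_le_one ?_ ?_
      · refine key.trans ?_
        rw [intervalIntegral.integral_const_mul, integral_id]
        apply le_of_eq
        ring
      · refine Filter.Eventually.of_forall fun t ht => ?_
        have ht0 : 0 < t := ht.1
        have h1 : ‖fderiv ℝ (gradient f) (xbar + t • w) - H‖ ≤ L * (t * h) := by
          have := hLip xbar (xbar + t • w)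
          rw [add_sub_cancel_left, norm_smul, Real.norm_eq_abs, abs_of_pos ht0, hw] at this
          exact this
        calc ‖(fderiv ℝ (gradient f) (xbar + t • w)) w - H w‖
            = ‖(fderiv ℝ (gradient f) (xbar + t • w) - H) w‖ := by
              rw [ContinuousLinearMap.sub_apply]
          _ ≤ ‖fderiv ℝ (gradient f) (xbar + t • w) - H‖ * ‖w‖ :=
              ContinuousLinearMap.le_opNorm _ _
          _ ≤ (L * (t * h)) * h := by
              rw [hw]
              exact mul_le_mul_of_nonneg_right h1 hh.le
          _ = L * h ^ 2 * t := by ring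
      · exact (continuous_const.mul continuous_id).intervalIntegrable 0 1
    have hnormd : ‖d‖ ≤ L * h / 2 := by
      rw [hdval, hsplit, norm_smul, Real.norm_eq_abs, abs_of_pos (inv_pos.mpr hh)]
      calc h⁻¹ * ‖∫ t in (0:ℝ)..1, ((fderiv ℝ (gradient f) (xbar + t • w)) w - H w)‖
          ≤ h⁻¹ * (L * h ^ 2 / 2) := mul_le_mul_of_nonneg_left hb (by positivity)
        _ = L * h / 2 := by field_simp
    have h1 : ∑ i, (A i j - Hmat i j) ^ 2 = ‖d‖ ^ 2 := by
      rw [euclid_norm_sq]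
      exact Finset.sum_congr rfl fun i _ => by rw [hdi]
    rw [h1]
    exact pow_le_pow_left₀ (norm_nonneg d) hnormd 2
  -- Frobenius bound for A - Hmat
  have hS : ∑ i, ∑ j, ((A - Hmat) i j) ^ 2 ≤ (n : ℝ) * (L * h / 2) ^ 2 := by
    rw [Finset.sum_comm]
    calc ∑ j, ∑ i, ((A - Hmat) i j) ^ 2 ≤ ∑ _j : Fin n, (L * h / 2) ^ 2 :=
          Finset.sum_le_sum fun j _ => by
            simpa [Matrix.sub_apply] using colbound j
      _ = (n : ℝ) * (L * h / 2) ^ 2 := by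
          simp [Finset.sum_const, mul_comm]
  have hT : ‖Matrix.toEuclideanCLM (𝕜 := ℝ) (A - Hmat)‖ ≤ Real.sqrt n * (L * h / 2) := by
    refine (frob_bound _).trans ?_
    calc Real.sqrt (∑ i, ∑ j, ((A - Hmat) i j) ^ 2)
        ≤ Real.sqrt ((n : ℝ) * (L * h / 2) ^ 2) := Real.sqrt_le_sqrt hS
      _ = Real.sqrt n * (L * h / 2) := by
          rw [Real.sqrt_mul (Nat.cast_nonneg n), Real.sqrt_sq (by positivity)]
  -- rewrite B
  have hB : B = (2 : ℝ)⁻¹ • (A + Aᵀ) := by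
    rw [hBdef, div_eq_mul_inv, matrix_two_inv_smul, mul_smul_comm, mul_one]
  have hkey : B - Hmat = (2 : ℝ)⁻¹ • ((A - Hmat) + (A - Hmat)ᵀ) := by
    ext i j
    simp only [hB, Matrix.sub_apply, Matrix.add_apply, Matrix.smul_apply,
      Matrix.transpose_apply, smul_eq_mul]
    have hs := hHmat_symm i j
    linarith [hHmat_symm i j]
  have hT' : ‖Matrix.toEuclideanCLM (𝕜 := ℝ) ((A - Hmat)ᵀ)‖ ≤ Real.sqrt n * (L * h / 2) := by
    refine (frob_bound _).trans ?_
    have hsw : ∑ i, ∑ j, (((A - Hmat)ᵀ) i j) ^ 2 = ∑ i, ∑ j, ((A - Hmat) i j) ^ 2 := by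
      rw [Finset.sum_comm]
      simp [Matrix.transpose_apply]
    rw [hsw]
    calc Real.sqrt (∑ i, ∑ j, ((A - Hmat) i j) ^ 2)
        ≤ Real.sqrt ((n : ℝ) * (L * h / 2) ^ 2) := Real.sqrt_le_sqrt hS
      _ = Real.sqrt n * (L * h / 2) := by
          rw [Real.sqrt_mul (Nat.cast_nonneg n), Real.sqrt_sq (by positivity)]
  have hgoal_lhs : Matrix.toEuclideanCLM (𝕜 := ℝ) B - H
      = (2 : ℝ)⁻¹ • (Matrix.toEuclideanCLM (𝕜 := ℝ) (A - Hmat)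
          + Matrix.toEuclideanCLM (𝕜 := ℝ) ((A - Hmat)ᵀ)) := by
    rw [← hHeq, ← map_sub, hkey, _root_.map_smul, map_add]
  rw [hgoal_lhs]
  have hT2 : ‖Matrix.toEuclideanCLM (𝕜 := ℝ) (A - Hmat)
        + Matrix.toEuclideanCLM (𝕜 := ℝ) ((A - Hmat)ᵀ)‖
      ≤ Real.sqrt n * (L * h / 2) + Real.sqrt n * (L * h / 2) :=
    (norm_add_le _ _).trans (add_le_add hT hT')
  calc ‖(2 : ℝ)⁻¹ • (Matrix.toEuclideanCLM (𝕜 := ℝ) (A - Hmat)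
        + Matrix.toEuclideanCLM (𝕜 := ℝ) ((A - Hmat)ᵀ))‖
      ≤ ‖(2 : ℝ)⁻¹‖ * ‖Matrix.toEuclideanCLM (𝕜 := ℝ) (A - Hmat)
          + Matrix.toEuclideanCLM (𝕜 := ℝ) ((A - Hmat)ᵀ)‖ := ContinuousLinearMap.opNorm_smul_le _ _
    _ ≤ ‖(2 : ℝ)⁻¹‖ * (Real.sqrt n * (L * h / 2) + Real.sqrt n * (L * h / 2)) :=
        mul_le_mul_of_nonneg_left hT2 (norm_nonneg _)
    _ = Real.sqrt n * L / 2 * h := by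
        rw [Real.norm_eq_abs, abs_of_pos (by norm_num)]
        ring
end

section
/- Suppose the Hessian of f is L-Lipschitz. Given x̄ ∈ ℝⁿ and h > 0, let g ∈ ℝⁿ be defined by g_i = (f(x̄ + h·e_i) − f(x̄ − h·e_i))/(2h) for i = 1, …, n. Then ‖g − ∇f(x̄)‖ ≤ (√n · L / 6)·h². -/
open RealInnerProductSpace

open intervalIntegral MeasureTheory in
private lemma stmt7_quad_aux (χ dχ : ℝ → ℝ) (L : ℝ) (hL : 0 ≤ L)
    (hd : ∀ t, HasDerivAt χ (dχ t) t)
    (hlip : ∀ s t : ℝ, |dχ s - dχ t| ≤ L * |s - t|) :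
    ∀ t : ℝ, 0 ≤ t → |χ t - χ 0 - t * dχ 0| ≤ L * t ^ 2 / 2 := by
  intro t ht
  have hcont : Continuous dχ := by
    have hl : LipschitzWith (Real.toNNReal L) dχ := by
      rw [lipschitzWith_iff_dist_le_mul]
      intro s u
      rw [Real.dist_eq, Real.dist_eq, Real.coe_toNNReal L hL]
      exact hlip s u
    exact hl.continuous
  have hint : IntervalIntegrable dχ volume 0 t := hcont.intervalIntegrable 0 t
  have hftc : ∫ s in (0:ℝ)..t, dχ s = χ t - χ 0 :=
    integral_eq_sub_of_hasDerivAt (fun s _ => hd s) hint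
  have h1 : χ t - χ 0 - t * dχ 0 = ∫ s in (0:ℝ)..t, (dχ s - dχ 0) := by
    rw [intervalIntegral.integral_sub hint intervalIntegrable_const, hftc,
      intervalIntegral.integral_const]
    simp [smul_eq_mul]
  rw [h1, ← Real.norm_eq_abs]
  have hb : ‖∫ s in (0:ℝ)..t, (dχ s - dχ 0)‖ ≤ |∫ s in (0:ℝ)..t, L * s| := by
    apply intervalIntegral.norm_integral_le_abs_of_norm_le
    · filter_upwards [ae_restrict_mem measurableSet_uIoc] with s hs
      rw [Set.uIoc_of_le ht] at hs
      calc ‖dχ s - dχ 0‖ ≤ L * |s - 0| := hlip s 0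
        _ = L * s := by rw [sub_zero, abs_of_nonneg hs.1.le]
    · exact (continuous_const.mul continuous_id).intervalIntegrable 0 t
  refine hb.trans ?_
  rw [intervalIntegral.integral_const_mul, integral_id,
    show L * ((t ^ 2 - 0 ^ 2) / 2) = L * t ^ 2 / 2 by ring, abs_of_nonneg (by positivity)]

private lemma stmt7_quad (χ dχ : ℝ → ℝ) (L : ℝ) (hL : 0 ≤ L)
    (hd : ∀ t, HasDerivAt χ (dχ t) t)
    (hlip : ∀ s t : ℝ, |dχ s - dχ t| ≤ L * |s - t|) (t : ℝ) :
    |χ t - χ 0 - t * dχ 0| ≤ L * t ^ 2 / 2 := by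
  rcases le_or_gt 0 t with ht | ht
  · exact stmt7_quad_aux χ dχ L hL hd hlip t ht
  · have hd' : ∀ s : ℝ, HasDerivAt (fun u => χ (-u)) (-dχ (-s)) s := by
      intro s
      have := (hd (-s)).comp s (hasDerivAt_neg s)
      rw [mul_neg, mul_one] at this
      exact this
    have hlip' : ∀ s u : ℝ, |(-dχ (-s)) - (-dχ (-u))| ≤ L * |s - u| := by
      intro s u
      have := hlip (-u) (-s)
      rw [show (-u) - (-s) = s - u by ring] at this
      rw [show (-dχ (-s)) - (-dχ (-u)) = dχ (-u) - dχ (-s) by ring]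
      exact this
    have := stmt7_quad_aux (fun u => χ (-u)) (fun s => -dχ (-s)) L hL hd' hlip' (-t)
      (by linarith)
    calc |χ t - χ 0 - t * dχ 0| = |χ (- -t) - χ (-0) - -t * -dχ (-0)| := by
          rw [neg_neg, neg_zero]; ring_nf
      _ ≤ L * (-t) ^ 2 / 2 := this
      _ = L * t ^ 2 / 2 := by ring

open intervalIntegral MeasureTheory in
private lemma stmt7_central (φ χ dχ : ℝ → ℝ) (L h : ℝ) (hL : 0 ≤ L) (hh : 0 < h)
    (hφ : ∀ t, HasDerivAt φ (χ t) t)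
    (hχ : ∀ t, HasDerivAt χ (dχ t) t)
    (hlip : ∀ s t : ℝ, |dχ s - dχ t| ≤ L * |s - t|) :
    |(φ h - φ (-h)) / (2 * h) - χ 0| ≤ L * h ^ 2 / 6 := by
  have hχc : Continuous χ := by
    have : Differentiable ℝ χ := fun t => (hχ t).differentiableAt
    exact this.continuous
  have hint : IntervalIntegrable χ volume (-h) h := hχc.intervalIntegrable _ _
  have hftc : ∫ t in (-h)..h, χ t = φ h - φ (-h) :=
    integral_eq_sub_of_hasDerivAt (fun t _ => hφ t) hint
  have haff : Continuous (fun t : ℝ => χ 0 + t * dχ 0) := by continuity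
  have hint2 : IntervalIntegrable (fun t : ℝ => χ 0 + t * dχ 0) volume (-h) h :=
    haff.intervalIntegrable _ _
  have haffint : ∫ t in (-h)..h, (χ 0 + t * dχ 0) = 2 * h * χ 0 := by
    rw [intervalIntegral.integral_add (f := fun _ => χ 0) (g := fun t : ℝ => t * dχ 0)
        intervalIntegrable_const
        ((continuous_id'.mul continuous_const).intervalIntegrable _ _)]
    rw [intervalIntegral.integral_mul_const, integral_id, intervalIntegral.integral_const]
    simp only [smul_eq_mul]
    ring
  have key : φ h - φ (-h) - 2 * h * χ 0 = ∫ t in (-h)..h, (χ t - (χ 0 + t * dχ 0)) := by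
    rw [intervalIntegral.integral_sub hint hint2, hftc, haffint]
  have hb : |φ h - φ (-h) - 2 * h * χ 0| ≤ L * h ^ 3 / 3 := by
    rw [key, ← Real.norm_eq_abs]
    have := intervalIntegral.norm_integral_le_abs_of_norm_le
      (μ := volume) (a := -h) (b := h) (f := fun t => χ t - (χ 0 + t * dχ 0))
      (g := fun t => L * t ^ 2 / 2)
      (by
        filter_upwards with t
        have := stmt7_quad χ dχ L hL hχ hlip t
        calc ‖χ t - (χ 0 + t * dχ 0)‖ = |χ t - χ 0 - t * dχ 0| := by
              rw [Real.norm_eq_abs]; ring_nf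
          _ ≤ L * t ^ 2 / 2 := this)
      (by
        apply Continuous.intervalIntegrable
        continuity)
    refine this.trans ?_
    have : ∫ t in (-h)..h, L * t ^ 2 / 2 = L * h ^ 3 / 3 := by
      simp_rw [show ∀ t : ℝ, L * t ^ 2 / 2 = (L / 2) * t ^ 2 by intro t; ring]
      rw [intervalIntegral.integral_const_mul, integral_pow]
      ring
    rw [this, abs_of_nonneg (by positivity)]
  have hne : (2 * h : ℝ) ≠ 0 := by positivity
  calc |(φ h - φ (-h)) / (2 * h) - χ 0| = |φ h - φ (-h) - 2 * h * χ 0| / (2 * h) := by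
        rw [show (φ h - φ (-h)) / (2 * h) - χ 0 = (φ h - φ (-h) - 2 * h * χ 0) / (2 * h) by
          field_simp, abs_div, abs_of_pos (by linarith : (0:ℝ) < 2 * h)]
    _ ≤ (L * h ^ 3 / 3) / (2 * h) := by
        apply div_le_div_of_nonneg_right hb
        linarith
    _ = L * h ^ 2 / 6 := by field_simp; ring

private lemma stmt7_coord {n : ℕ}
    (f : EuclideanSpace ℝ (Fin n) → ℝ)
    (L : ℝ) (hL : 0 ≤ L)
    (hf : ContDiff ℝ 2 f)
    (hLip : ∀ u v : EuclideanSpace ℝ (Fin n),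
      ‖fderiv ℝ (gradient f) v - fderiv ℝ (gradient f) u‖ ≤ L * ‖v - u‖)
    (xbar : EuclideanSpace ℝ (Fin n)) (h : ℝ) (hh : 0 < h) (i : Fin n) :
    |(f (xbar + h • EuclideanSpace.single i 1) - f (xbar - h • EuclideanSpace.single i 1))
        / (2 * h) - gradient f xbar i| ≤ L * h ^ 2 / 6 := by
  set e : EuclideanSpace ℝ (Fin n) := EuclideanSpace.single i 1 with he_def
  have he : ‖e‖ = 1 := by simp [he_def]
  have hdf : Differentiable ℝ f := hf.differentiable (by norm_num)
  have hgrad : ContDiff ℝ 1 (gradient f) := by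
    have h1 : ContDiff ℝ 1 (fderiv ℝ f) := hf.fderiv_right (le_refl 2)
    have h2 : gradient f = fun y =>
        (InnerProductSpace.toDual ℝ (EuclideanSpace ℝ (Fin n))).symm (fderiv ℝ f y) := rfl
    rw [h2]
    exact (InnerProductSpace.toDual ℝ (EuclideanSpace ℝ (Fin n))).symm.contDiff.comp h1
  have hdgrad : Differentiable ℝ (gradient f) := hgrad.differentiable one_ne_zero
  set c : ℝ → EuclideanSpace ℝ (Fin n) := fun t => xbar + t • e with hc_def
  have hc : ∀ t : ℝ, HasDerivAt c e t := by
    intro t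
    have : HasDerivAt (fun t : ℝ => t • e) ((1:ℝ) • e) t := (hasDerivAt_id t).smul_const e
    simpa [hc_def] using this.const_add xbar
  have hkey : ∀ (y : EuclideanSpace ℝ (Fin n)) (v : EuclideanSpace ℝ (Fin n)),
      fderiv ℝ f y v = ⟪gradient f y, v⟫ := by
    intro y v
    rw [gradient, ← InnerProductSpace.toDual_apply_apply, LinearIsometryEquiv.apply_symm_apply]
  set φ : ℝ → ℝ := fun t => f (c t) with hφ_def
  set χ : ℝ → ℝ := fun t => ⟪e, gradient f (c t)⟫ with hχ_def
  set dχ : ℝ → ℝ := fun t => ⟪e, fderiv ℝ (gradient f) (c t) e⟫ with hdχ_def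
  have hφ : ∀ t, HasDerivAt φ (χ t) t := by
    intro t
    have h1 : HasDerivAt (f ∘ c) (fderiv ℝ f (c t) e) t :=
      (hdf (c t)).hasFDerivAt.comp_hasDerivAt t (hc t)
    have h2 : fderiv ℝ f (c t) e = χ t := by
      rw [hkey, hχ_def, real_inner_comm]
    rw [← h2]; exact h1
  have hχd : ∀ t, HasDerivAt χ (dχ t) t := by
    intro t
    have h1 : HasDerivAt (fun s => gradient f (c s)) (fderiv ℝ (gradient f) (c t) e) t :=
      (hdgrad (c t)).hasFDerivAt.comp_hasDerivAt t (hc t)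
    exact ((innerSL ℝ e).hasFDerivAt.comp_hasDerivAt t h1)
  have hlip : ∀ s t : ℝ, |dχ s - dχ t| ≤ L * |s - t| := by
    intro s t
    have h1 : dχ s - dχ t
        = ⟪e, (fderiv ℝ (gradient f) (c s) - fderiv ℝ (gradient f) (c t)) e⟫ := by
      simp [hdχ_def, ContinuousLinearMap.sub_apply, inner_sub_right]
    rw [h1]
    have hcs : c s - c t = (s - t) • e := by
      simp only [hc_def]
      module
    calc |⟪e, (fderiv ℝ (gradient f) (c s) - fderiv ℝ (gradient f) (c t)) e⟫|
        ≤ ‖e‖ * ‖(fderiv ℝ (gradient f) (c s) - fderiv ℝ (gradient f) (c t)) e‖ :=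
          abs_real_inner_le_norm _ _
      _ ≤ ‖e‖ * (‖fderiv ℝ (gradient f) (c s) - fderiv ℝ (gradient f) (c t)‖ * ‖e‖) :=
          mul_le_mul_of_nonneg_left (ContinuousLinearMap.le_opNorm _ _) (norm_nonneg e)
      _ = ‖fderiv ℝ (gradient f) (c s) - fderiv ℝ (gradient f) (c t)‖ := by rw [he]; ring
      _ ≤ L * ‖c s - c t‖ := hLip (c t) (c s)
      _ = L * |s - t| := by rw [hcs, norm_smul, he, mul_one, Real.norm_eq_abs]
  have hcoord : gradient f xbar i = χ 0 := by
    have h0 : χ 0 = ⟪e, gradient f xbar⟫ := by simp [hχ_def, hc_def]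
    rw [h0, he_def]
    have := EuclideanSpace.inner_single_left (𝕜 := ℝ) i 1 (gradient f xbar)
    simp at this
    simp [this]
  have hph : φ h = f (xbar + h • e) := rfl
  have hpmh : φ (-h) = f (xbar - h • e) := by
    simp only [hφ_def, hc_def, neg_smul, sub_eq_add_neg]
  rw [← hph, ← hpmh, hcoord]
  exact stmt7_central φ χ dχ L h hL hh hφ hχd hlip

/-- Lemma 5 of the paper: accuracy of the central finite-difference
approximation of the gradient. -/
theorem stmt_7 {n : ℕ} (hn : 1 ≤ n)
    (f : EuclideanSpace ℝ (Fin n) → ℝ)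
    (L : ℝ) (hL : 0 ≤ L)
    (hf : ContDiff ℝ 2 f)
    (hLip : ∀ u v : EuclideanSpace ℝ (Fin n),
      ‖fderiv ℝ (gradient f) v - fderiv ℝ (gradient f) u‖ ≤ L * ‖v - u‖)
    (xbar : EuclideanSpace ℝ (Fin n)) (h : ℝ) (hh : 0 < h)
    (g : EuclideanSpace ℝ (Fin n))
    (hg : ∀ i : Fin n, g i =
      (f (xbar + h • EuclideanSpace.single i 1) - f (xbar - h • EuclideanSpace.single i 1))
        / (2 * h)) :
    ‖g - gradient f xbar‖ ≤ Real.sqrt n * L / 6 * h ^ 2 := by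
  have hB : ∀ i : Fin n, |(g - gradient f xbar) i| ≤ L * h ^ 2 / 6 := by
    intro i
    have := stmt7_coord f L hL hf hLip xbar h hh i
    rw [← hg i] at this
    simpa using this
  set B : ℝ := L * h ^ 2 / 6 with hB_def
  have hBnn : 0 ≤ B := by positivity
  calc ‖g - gradient f xbar‖
      = Real.sqrt (∑ i, ‖(g - gradient f xbar) i‖ ^ 2) := EuclideanSpace.norm_eq _
    _ ≤ Real.sqrt (∑ _i : Fin n, B ^ 2) := by
        apply Real.sqrt_le_sqrt
        apply Finset.sum_le_sum
        intro i _
        have := hB i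
        rw [Real.norm_eq_abs]
        nlinarith [abs_nonneg ((g - gradient f xbar) i)]
    _ = Real.sqrt (n * B ^ 2) := by rw [Finset.sum_const, Finset.card_univ, Fintype.card_fin,
        nsmul_eq_mul]
    _ = Real.sqrt n * B := by
        rw [Real.sqrt_mul (Nat.cast_nonneg n), Real.sqrt_sq hBnn]
    _ = Real.sqrt n * L / 6 * h ^ 2 := by rw [hB_def]; ring
end
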